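/- Let z, w be M-dimensional square-integrable random vectors, standardized componentwise, with cross-covariance matrix A = Σ_{zw} and covariance matrix B = Σ_{zz}, both full rank. Then the sum of the singular values of A satisfies Σ_i σ_i(A) ≥ M - M·sqrt(M·Σ_{l=1}^M Var[z_l - w_l]). -/

import Mathlib

open MeasureTheory ProbabilityTheory Matrix

/-- Covariance of two real random variables. -/
noncomputable def cov {Ω : Type*} [MeasurableSpace Ω] (μ : Measure Ω)
    (X Y : Ω → ℝ) : ℝ :=
  ∫ ω, (X ω - ∫ a, X a ∂μ) * (Y ω - ∫ a, Y a ∂μ) ∂μ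

/-- The singular values of a real square matrix:
square roots of the eigenvalues of `Aᴴ * A`. -/
noncomputable def sval {M : ℕ} (A : Matrix (Fin M) (Fin M) ℝ) (i : Fin M) : ℝ :=
  Real.sqrt ((Matrix.isHermitian_conjTranspose_mul_self A).eigenvalues i)

section MatrixPart

lemma cs_step {M : ℕ} (U : Matrix (Fin M) (Fin M) ℝ)
    (hU : Uᵀ * U = 1) (x : Fin M → ℝ) : x ⬝ᵥ (U *ᵥ x) ≤ x ⬝ᵥ x := by
  have hy : (U *ᵥ x) ⬝ᵥ (U *ᵥ x) = x ⬝ᵥ x := by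
    calc (U *ᵥ x) ⬝ᵥ (U *ᵥ x) = ((U *ᵥ x) ᵥ* U) ⬝ᵥ x := dotProduct_mulVec _ _ _
    _ = (Uᵀ *ᵥ (U *ᵥ x)) ⬝ᵥ x := by rw [mulVec_transpose]
    _ = ((Uᵀ * U) *ᵥ x) ⬝ᵥ x := by rw [mulVec_mulVec]
    _ = x ⬝ᵥ x := by rw [hU, one_mulVec]
  have hcs := Finset.sum_mul_sq_le_sq_mul_sq Finset.univ x (U *ᵥ x)
  have hxx : 0 ≤ x ⬝ᵥ x := by
    simp only [dotProduct]
    exact Finset.sum_nonneg fun i _ => mul_self_nonneg _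
  simp only [dotProduct, pow_two] at *
  nlinarith [hcs, hxx, hy]

lemma conjT_eq_transpose {M : ℕ} (A : Matrix (Fin M) (Fin M) ℝ) : Aᴴ = Aᵀ := by
  ext i j; simp [conjTranspose_apply]

open scoped MatrixOrder in
lemma trace_le_sum_sval {M : ℕ} (A : Matrix (Fin M) (Fin M) ℝ) (hAdet : IsUnit A.det) :
    A.trace ≤ ∑ i, sval A i := by
  have hH : (Aᴴ * A).PosSemidef := posSemidef_conjTranspose_mul_self A
  set P := CFC.sqrt (Aᴴ * A) with hPdef
  have hP : P.PosSemidef := (CFC.sqrt_nonneg _).posSemidef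
  have hPP : P * P = Aᴴ * A := CFC.sqrt_mul_sqrt_self _ hH.nonneg
  have hHdet : IsUnit (Aᴴ * A).det := by
    rw [det_mul, conjT_eq_transpose, det_transpose]
    exact hAdet.mul hAdet
  have hPdet : IsUnit P.det := by
    have h2 : P.det * P.det = (Aᴴ * A).det := by rw [← det_mul, hPP]
    exact isUnit_of_mul_isUnit_left (h2 ▸ hHdet)
  have hPsym : Pᵀ = P := by rw [← conjT_eq_transpose]; exact hP.1
  set U := A * P⁻¹ with hUdef
  have hU : Uᵀ * U = 1 := by
    have h1 : Uᵀ = P⁻¹ * Aᵀ := by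
      rw [hUdef, transpose_mul, transpose_nonsing_inv, hPsym]
    have hPPt : Aᵀ * A = P * P := by rw [hPP, conjT_eq_transpose]
    rw [h1, hUdef]
    calc P⁻¹ * Aᵀ * (A * P⁻¹) = P⁻¹ * (Aᵀ * A) * P⁻¹ := by noncomm_ring
    _ = P⁻¹ * (P * P) * P⁻¹ := by rw [hPPt]
    _ = (P⁻¹ * P) * (P * P⁻¹) := by noncomm_ring
    _ = 1 := by rw [nonsing_inv_mul _ hPdet, mul_nonsing_inv _ hPdet, one_mul]
  have hAUP : A = U * P := by
    rw [hUdef, mul_assoc, nonsing_inv_mul _ hPdet, mul_one]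
  set Q := CFC.sqrt P with hQdef
  have hQ : Q.PosSemidef := (CFC.sqrt_nonneg _).posSemidef
  have hQQ : Q * Q = P := CFC.sqrt_mul_sqrt_self _ hP.nonneg
  have hQsym : ∀ a b, Q a b = Q b a := by
    intro a b
    simpa using (hQ.1.apply a b).symm
  have htr : A.trace = (Q * U * Q).trace := by
    conv_lhs => rw [hAUP, ← hQQ]
    rw [← mul_assoc, trace_mul_comm, ← mul_assoc]
  have hkey : ∀ i, (Q * U * Q) i i ≤ P i i := by
    intro i
    set x : Fin M → ℝ := fun j => Q j i with hxdef
    have h1 : (Q * U * Q) i i = x ⬝ᵥ (U *ᵥ x) := by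
      simp only [mul_apply, dotProduct, mulVec, hxdef, Finset.mul_sum, Finset.sum_mul]
      rw [Finset.sum_comm]
      apply Finset.sum_congr rfl; intro j _
      apply Finset.sum_congr rfl; intro k _
      rw [hQsym i j]; ring
    have h2 : P i i = x ⬝ᵥ x := by
      rw [← hQQ]
      simp only [mul_apply, dotProduct, hxdef]
      apply Finset.sum_congr rfl; intro j _
      rw [hQsym i j]
    rw [h1, h2]
    exact cs_step U hU x
  have htrP : (Q * U * Q).trace ≤ P.trace := by
    simp only [trace, diag]
    exact Finset.sum_le_sum fun i _ => hkey i
  have htrsval : P.trace = ∑ i, sval A i := by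
    rw [hPdef, CFC.sqrt_eq_cfc, cfc_nnreal_eq_real _ _ hH.nonneg, hH.1.cfc_eq, IsHermitian.cfc,
      Unitary.conjStarAlgAut_apply, trace_mul_cycle]
    have h1 : (star hH.1.eigenvectorUnitary : Matrix (Fin M) (Fin M) ℝ) *
        hH.1.eigenvectorUnitary.1 = 1 :=
      (Unitary.mem_iff.mp hH.1.eigenvectorUnitary.2).1
    rw [h1, one_mul, trace_diagonal]
    refine Finset.sum_congr rfl fun i _ => ?_
    simp [sval, Real.coe_toNNReal']
    exact congrArg _ (max_eq_left (hH.eigenvalues_nonneg i))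
  calc A.trace = (Q * U * Q).trace := htr
  _ ≤ P.trace := htrP
  _ = ∑ i, sval A i := htrsval

end MatrixPart

section ProbPart

variable {Ω : Type*} [MeasurableSpace Ω] {μ : Measure Ω} [IsProbabilityMeasure μ]

omit [IsProbabilityMeasure μ] in
lemma my_integrable_mul {z w : Ω → ℝ} (hz : MemLp z 2 μ) (hw : MemLp w 2 μ) :
    Integrable (fun ω => z ω * w ω) μ := by
  have h1 : Integrable (fun ω => (z ω + w ω) ^ 2) μ := by
    simpa using (hz.add hw).integrable_sq
  have h2 : Integrable (fun ω => ((z ω + w ω) ^ 2 - z ω ^ 2 - w ω ^ 2) / 2) μ :=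
    ((h1.sub hz.integrable_sq).sub hw.integrable_sq).div_const 2
  have : (fun ω => ((z ω + w ω) ^ 2 - z ω ^ 2 - w ω ^ 2) / 2) = fun ω => z ω * w ω := by
    funext ω; ring
  rwa [this] at h2

lemma int_sq_one {z : Ω → ℝ} (hz : MemLp z 2 μ)
    (hzm : (∫ ω, z ω ∂μ) = 0) (hzv : variance z μ = 1) :
    (∫ ω, z ω ^ 2 ∂μ) = 1 := by
  have h := variance_eq_sub hz; rw [hzm] at h
  simp only [Pi.pow_apply] at h; linarith [hzv ▸ h.symm]

lemma key_var {z w : Ω → ℝ} (hz : MemLp z 2 μ) (hw : MemLp w 2 μ)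
    (hzm : (∫ ω, z ω ∂μ) = 0) (hzv : variance z μ = 1)
    (hwm : (∫ ω, w ω ∂μ) = 0) (hwv : variance w μ = 1) :
    variance (z - w) μ = 2 - 2 * ∫ ω, z ω * w ω ∂μ := by
  have hzw : Integrable (fun ω => z ω * w ω) μ := my_integrable_mul hz hw
  have hz2 : Integrable (fun ω => z ω ^ 2) μ := hz.integrable_sq
  have hw2 : Integrable (fun ω => w ω ^ 2) μ := hw.integrable_sq
  have hvz : (∫ ω, z ω ^ 2 ∂μ) = 1 := int_sq_one hz hzm hzv
  have hvw : (∫ ω, w ω ^ 2 ∂μ) = 1 := int_sq_one hw hwm hwv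
  have h1 : (∫ ω, (z ω - w ω) ∂μ) = 0 := by
    rw [integral_sub (hz.integrable one_le_two) (hw.integrable one_le_two), hzm, hwm, sub_zero]
  have h2 : (∫ ω, (z ω - w ω) ^ 2 ∂μ) = 2 - 2 * ∫ ω, z ω * w ω ∂μ := by
    have e : (fun ω => (z ω - w ω) ^ 2)
        = fun ω => (z ω ^ 2 - 2 * (z ω * w ω)) + w ω ^ 2 := by funext ω; ring
    have ha : Integrable (fun ω => z ω ^ 2 - 2 * (z ω * w ω)) μ := hz2.sub (hzw.const_mul 2)
    have hb : Integrable (fun ω => 2 * (z ω * w ω)) μ := hzw.const_mul 2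
    rw [e, integral_add ha hw2, integral_sub hz2 hb, integral_const_mul, hvz, hvw]
    ring
  rw [variance_eq_sub (hz.sub hw)]
  simp only [Pi.pow_apply, Pi.sub_apply]
  rw [h1, h2]
  ring

lemma mul_int_ge_neg_one {z w : Ω → ℝ} (hz : MemLp z 2 μ) (hw : MemLp w 2 μ)
    (hvz : (∫ ω, z ω ^ 2 ∂μ) = 1) (hvw : (∫ ω, w ω ^ 2 ∂μ) = 1) :
    -1 ≤ ∫ ω, z ω * w ω ∂μ := by
  have hzw : Integrable (fun ω => z ω * w ω) μ := my_integrable_mul hz hw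
  have h0 : 0 ≤ ∫ ω, (z ω + w ω) ^ 2 ∂μ := integral_nonneg fun ω => sq_nonneg _
  have h2 : (∫ ω, (z ω + w ω) ^ 2 ∂μ)
      = (∫ ω, z ω ^ 2 ∂μ) + 2 * (∫ ω, z ω * w ω ∂μ) + ∫ ω, w ω ^ 2 ∂μ := by
    have e : (fun ω => (z ω + w ω) ^ 2)
        = fun ω => (z ω ^ 2 + 2 * (z ω * w ω)) + w ω ^ 2 := by funext ω; ring
    have hb : Integrable (fun ω => 2 * (z ω * w ω)) μ := hzw.const_mul 2
    have ha : Integrable (fun ω => z ω ^ 2 + 2 * (z ω * w ω)) μ := hz.integrable_sq.add hb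
    rw [e, integral_add ha hw.integrable_sq, integral_add hz.integrable_sq hb, integral_const_mul]
  rw [h2, hvz, hvw] at h0
  linarith

end ProbPart

/-- Lower bound on the sum of singular values of the cross-covariance matrix of
two standardized random vectors. -/
theorem sum_sval_cross_cov_lower_bound
    {Ω : Type*} [MeasurableSpace Ω] (μ : Measure Ω) [IsProbabilityMeasure μ]
    {M : ℕ}
    (z w : Fin M → Ω → ℝ)
    (hz : ∀ i, MemLp (z i) 2 μ) (hw : ∀ i, MemLp (w i) 2 μ)
    (hzm : ∀ i, (∫ ω, z i ω ∂μ) = 0) (hzv : ∀ i, variance (z i) μ = 1)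
    (hwm : ∀ i, (∫ ω, w i ω ∂μ) = 0) (hwv : ∀ i, variance (w i) μ = 1)
    (A B : Matrix (Fin M) (Fin M) ℝ)
    (hA : ∀ i j, A i j = cov μ (z i) (w j))
    (hB : ∀ i j, B i j = cov μ (z i) (z j))
    (hAdet : IsUnit A.det) (hBdet : IsUnit B.det) :
    (M : ℝ) - M * Real.sqrt (M * ∑ l, variance (z l - w l) μ) ≤ ∑ i, sval A i := by
  rcases Nat.eq_zero_or_pos M with hM | hM
  · subst hM; simp
  have hM1 : (1 : ℝ) ≤ M := by exact_mod_cast hM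
  set c : Fin M → ℝ := fun l => ∫ ω, z l ω * w l ω ∂μ with hcdef
  have hvar : ∀ l, variance (z l - w l) μ = 2 - 2 * c l := fun l =>
    key_var (hz l) (hw l) (hzm l) (hzv l) (hwm l) (hwv l)
  have hAll : ∀ l, A l l = c l := by
    intro l
    rw [hA l l]
    simp only [cov, hzm l, hwm l, sub_zero, hcdef]
  have htr : A.trace = ∑ l, c l := by
    simp only [trace, diag]
    exact Finset.sum_congr rfl fun l _ => hAll l
  have hsum : ∑ l, c l ≤ ∑ i, sval A i := htr ▸ trace_le_sum_sval A hAdet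
  have hc : ∀ l, -1 ≤ c l := fun l =>
    mul_int_ge_neg_one (hz l) (hw l) (int_sq_one (hz l) (hzm l) (hzv l))
      (int_sq_one (hw l) (hwm l) (hwv l))
  set S : ℝ := ∑ l, variance (z l - w l) μ with hSdef
  have hS : S = 2 * M - 2 * ∑ l, c l := by
    rw [hSdef]
    rw [Finset.sum_congr rfl fun l _ => hvar l]
    rw [Finset.sum_sub_distrib, Finset.sum_const, ← Finset.mul_sum]
    simp [mul_comm]
  have hS0 : 0 ≤ S := Finset.sum_nonneg fun l _ => variance_nonneg _ _
  have hcge : -(M : ℝ) ≤ ∑ l, c l := by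
    have := Finset.sum_le_sum (fun l (_ : l ∈ Finset.univ) => hc l)
    simpa using this
  have hS4 : S ≤ 4 * M := by rw [hS]; linarith
  set t : ℝ := Real.sqrt (M * S) with htdef
  have ht0 : 0 ≤ t := Real.sqrt_nonneg _
  have ht2 : t ^ 2 = M * S := Real.sq_sqrt (mul_nonneg (by positivity) hS0)
  have hST : S ≤ 2 * M * t := by
    have key : S ^ 2 ≤ (2 * M * t) ^ 2 := by
      have e1 : (0:ℝ) ≤ ((M:ℝ) - 1) * ((M:ℝ) + 1) * (M:ℝ) :=
        mul_nonneg (mul_nonneg (by linarith) (by linarith)) (by linarith)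
      have h4 : (0 : ℝ) ≤ 4 * M ^ 3 - S := by nlinarith [e1, hS4]
      nlinarith [mul_nonneg hS0 h4]
    have h2mt : 0 ≤ 2 * M * t := by positivity
    nlinarith [key, h2mt, hS0]
  calc (M : ℝ) - M * t ≤ ∑ l, c l := by linarith
  _ ≤ ∑ i, sval A i := hsum
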